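/- A sequence π = (u_0, ..., u_k) of words over A is productive in the VAS V = (A, δ, x_in) for the word a_1⋯a_k if and only if (1) the partial sums δ(u_0) + ⋯ + δ(u_j) are componentwise nonnegative for every j ∈ {0,...,k}, and (2) the word u_0 a_1 u_1 ⋯ a_k u_k is fireable from x_in. -/

import Mathlib

/-- A vector addition system of dimension `d` over alphabet `α`. -/
structure VAS (α : Type) (d : ℕ) where
  δ : α → Fin d → ℤ
  init : Fin d → ℕ

/-- Displacement of a word: `δ` extended to a monoid morphism on words. -/
def wordδ {α : Type} {d : ℕ} (V : VAS α d) (w : List α) : Fin d → ℤ :=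
  (w.map V.δ).sum

/-- A word is fireable from `x` if every intermediate state is nonnegative. -/
def Fireable {α : Type} {d : ℕ} (V : VAS α d) (x : Fin d → ℕ) (w : List α) : Prop :=
  ∀ p, p <+: w → ∀ i, 0 ≤ (x i : ℤ) + wordδ V p i

/-- The reachability set of the VAS `V`. -/
def PostStar {α : Type} {d : ℕ} (V : VAS α d) : Set (Fin d → ℕ) :=
  {y | ∃ w : List α, Fireable V V.init w ∧ ∀ i, (y i : ℤ) = V.init i + wordδ V w i}

/-- The word `u_0^n a_1 u_1^n ⋯ a_k u_k^n`. -/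
def iterWord {α : Type} {k : ℕ} (u : Fin (k+1) → List α) (a : Fin k → α) (n : ℕ) : List α :=
  (List.replicate n (u 0)).flatten ++
    (List.ofFn fun i : Fin k => a i :: (List.replicate n (u i.succ)).flatten).flatten

/-- `π = (u_0, …, u_k)` is productive for `v = a_1 ⋯ a_k` if
`u_0^n a_1 u_1^n ⋯ a_k u_k^n` is fireable from the initial state for all `n ≥ 1`. -/
def Productive {α : Type} {d : ℕ} (V : VAS α d) {k : ℕ}
    (u : Fin (k+1) → List α) (a : Fin k → α) : Prop :=
  ∀ n ≥ 1, Fireable V V.init (iterWord u a n)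

section Aux
variable {α : Type} {d : ℕ} (V : VAS α d)

lemma wordδ_append (v w : List α) : wordδ V (v ++ w) = wordδ V v + wordδ V w := by
  simp [wordδ]

lemma wordδ_cons (b : α) (w : List α) : wordδ V (b :: w) = V.δ b + wordδ V w := by
  simp [wordδ]

lemma wordδ_rep (n : ℕ) (v : List α) :
    wordδ V ((List.replicate n v).flatten) = n • wordδ V v := by
  induction n with
  | zero => simp [wordδ]
  | succ n ih =>
    rw [List.replicate_succ, List.flatten_cons, wordδ_append, ih, succ_nsmul, add_comm]

lemma wordδ_flatten (M : List (List α)) : wordδ V M.flatten = (M.map (wordδ V)).sum := by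
  induction M with
  | nil => simp [wordδ]
  | cons w M ih => simp [wordδ_append, ih]

def FireZ (x : Fin d → ℤ) (w : List α) : Prop :=
  ∀ p, p <+: w → ∀ i, 0 ≤ x i + wordδ V p i

lemma FireZ_nonneg {x : Fin d → ℤ} {w : List α} (h : FireZ V x w) : ∀ i, 0 ≤ x i := fun i => by
  simpa [wordδ] using h [] ⟨w, rfl⟩ i

lemma FireZ_mono {x y : Fin d → ℤ} {w : List α} (hxy : ∀ i, x i ≤ y i) (h : FireZ V x w) :
    FireZ V y w := fun p hp i => (h p hp i).trans (add_le_add_left (hxy i) _)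

lemma FireZ_append {x : Fin d → ℤ} {v w : List α} :
    FireZ V x (v ++ w) ↔ FireZ V x v ∧ FireZ V (x + wordδ V v) w := by
  constructor
  · intro h
    refine ⟨fun p hp i => h p (hp.trans (List.prefix_append v w)) i, fun p hp i => ?_⟩
    have := h (v ++ p) ((List.prefix_append_right_inj v).mpr hp) i
    rw [wordδ_append] at this
    simpa [add_assoc] using this
  · rintro ⟨h1, h2⟩ p hp i
    rcases List.prefix_or_prefix_of_prefix hp (List.prefix_append v w) with h | h
    · exact h1 p h i
    · obtain ⟨q, rfl⟩ := h
      have hq : q <+: w := (List.prefix_append_right_inj v).mp hp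
      have := h2 q hq i
      rw [wordδ_append]
      simpa [add_assoc] using this

lemma FireZ_pow {z y : Fin d → ℤ} {v : List α} {n : ℕ}
    (hz : FireZ V z v) (hy : ∀ i, 0 ≤ y i)
    (h : ∀ m, m < n → ∀ i, z i ≤ y i + m • wordδ V v i) :
    FireZ V y ((List.replicate n v).flatten) := by
  induction n generalizing y with
  | zero =>
    intro p hp i
    rw [List.replicate_zero, List.flatten_nil, List.prefix_nil] at hp
    subst hp
    simpa [wordδ] using hy i
  | succ n ih =>
    rw [List.replicate_succ, List.flatten_cons, FireZ_append]
    have h0 : ∀ i, z i ≤ y i := fun i => by simpa using h 0 n.succ_pos i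
    refine ⟨FireZ_mono V h0 hz, ih (fun i => ?_) (fun m hm i => ?_)⟩
    · have hv := hz v (List.prefix_refl v) i
      have := h0 i
      simp only [Pi.add_apply]
      linarith
    · have := h (m+1) (Nat.succ_lt_succ hm) i
      rw [succ_nsmul] at this
      simp only [Pi.add_apply]
      linarith

lemma FireZ_flatten_of {x : Fin d → ℤ} {M : List (List α)} (hx : ∀ i, 0 ≤ x i)
    (h : ∀ j, (hj : j < M.length) → FireZ V (x + wordδ V ((M.take j).flatten)) (M[j]'hj)) :
    FireZ V x M.flatten := by
  induction M generalizing x with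
  | nil =>
    intro p hp i
    rw [List.flatten_nil, List.prefix_nil] at hp
    subst hp
    simpa [wordδ] using hx i
  | cons w M ih =>
    rw [List.flatten_cons, FireZ_append]
    have h0 : FireZ V x w := by
      have := h 0 (by simp)
      convert this using 1 <;> simp [wordδ]
    refine ⟨h0, ih (fun i => ?_) (fun j hj => ?_)⟩
    · simpa using h0 w (List.prefix_refl w) i
    · have := h (j+1) (by simpa using hj)
      simpa [List.take_succ_cons, wordδ_append, add_assoc] using this

lemma FireZ_flatten_get {x : Fin d → ℤ} {M : List (List α)} (h : FireZ V x M.flatten)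
    (j : ℕ) (hj : j < M.length) :
    FireZ V (x + wordδ V ((M.take j).flatten)) (M[j]'hj) := by
  have hM : M.flatten = (M.take j).flatten ++ ((M[j]'hj) ++ ((M.drop (j+1)).flatten)) := by
    conv_lhs => rw [← List.take_append_drop j M]
    rw [List.flatten_append, List.drop_eq_getElem_cons hj, List.flatten_cons]
  rw [hM, FireZ_append] at h
  exact ((FireZ_append V).mp h.2).1

lemma flatten_take_prefix (M : List (List α)) (j : ℕ) : ((M.take j).flatten) <+: M.flatten :=
  ⟨(M.drop j).flatten, by rw [← List.flatten_append, List.take_append_drop]⟩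


variable {k : ℕ} (u : Fin (k+1) → List α) (a : Fin k → α)

def blk (n : ℕ) : Fin (k+1) → List α :=
  Fin.cases ((List.replicate n (u 0)).flatten)
    (fun i => a i :: (List.replicate n (u i.succ)).flatten)

lemma iterWord_eq (n : ℕ) : iterWord u a n = (List.ofFn (blk u a n)).flatten := by
  rw [List.ofFn_succ, List.flatten_cons]
  simp only [iterWord, blk, Fin.cases_zero, Fin.cases_succ]

def cvec : Fin (k+1) → Fin d → ℤ :=
  Fin.cases 0 (fun i => V.δ (a i))

lemma wordδ_blk (n : ℕ) (l : Fin (k+1)) :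
    wordδ V (blk u a n l) = cvec V a l + n • wordδ V (u l) := by
  induction l using Fin.cases with
  | zero => simp [blk, cvec, wordδ_rep]
  | succ i => simp [blk, cvec, wordδ_rep, wordδ_cons]

def SS (j : ℕ) : Fin d → ℤ :=
  ∑ l ∈ Finset.univ.filter (fun l : Fin (k+1) => l.val < j), wordδ V (u l)

def CC (j : ℕ) : Fin d → ℤ :=
  ∑ l ∈ Finset.univ.filter (fun l : Fin (k+1) => l.val < j), cvec V a l

lemma D_eq (n j : ℕ) :
    wordδ V (((List.ofFn (blk u a n)).take j).flatten) = CC V a j + n • SS V u j := by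
  rw [wordδ_flatten, List.map_take, List.map_ofFn, List.sum_take_ofFn]
  simp only [Function.comp, wordδ_blk]
  rw [Finset.sum_add_distrib]
  congr 1
  rw [SS, Finset.smul_sum]

lemma SS_apply_fin (j : Fin (k+1)) (i : Fin d) :
    SS V u (j.val+1) i = ∑ l ∈ Finset.univ.filter (fun l => l ≤ j), wordδ V (u l) i := by
  rw [SS, Finset.sum_apply]
  congr 1
  ext l
  simp only [Finset.mem_filter, Finset.mem_univ, true_and, Fin.le_def, Nat.lt_succ_iff]

lemma SS_apply_nat (m : ℕ) (i : Fin d) :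
    SS V u (m+1) i
      = ∑ l ∈ Finset.univ.filter
          (fun l => l ≤ (⟨min m k, by omega⟩ : Fin (k+1))), wordδ V (u l) i := by
  rw [SS, Finset.sum_apply]
  congr 1
  ext l
  have := l.isLt
  simp only [Finset.mem_filter, Finset.mem_univ, true_and, Fin.le_def, Nat.lt_succ_iff]
  omega

lemma SS_succ (l : Fin (k+1)) :
    SS V u (l.val+1) = SS V u l.val + wordδ V (u l) := by
  rw [SS, SS]
  have hins : (Finset.univ.filter (fun x : Fin (k+1) => x.val < l.val+1))
      = insert l (Finset.univ.filter (fun x : Fin (k+1) => x.val < l.val)) := by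
    ext x
    simp only [Finset.mem_filter, Finset.mem_univ, true_and, Finset.mem_insert,
      Fin.ext_iff, Nat.lt_succ_iff]
    omega
  rw [hins, Finset.sum_insert (by simp), add_comm]

lemma SS_zero : SS V u 0 = 0 := by
  simp [SS]

lemma CC_zero : CC V a 0 = 0 := by
  simp [CC]

lemma blk_succ (n : ℕ) (i : Fin k) :
    blk u a n i.succ = a i :: (List.replicate n (u i.succ)).flatten := by
  simp only [blk, Fin.cases_succ]

end Aux

/-- `(u_0, …, u_k)` is productive for `a_1 ⋯ a_k` iff (1) all partial sums
`δ(u_0) + ⋯ + δ(u_j)` are nonnegative and (2) `u_0 a_1 u_1 ⋯ a_k u_k` is fireable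
from the initial state. -/
theorem stmt_6 {α : Type} [Finite α] {d : ℕ} (V : VAS α d) {k : ℕ}
    (u : Fin (k+1) → List α) (a : Fin k → α) :
    Productive V u a ↔
      ((∀ j : Fin (k+1), ∀ i, 0 ≤ ∑ l ∈ Finset.univ.filter (fun l => l ≤ j), wordδ V (u l) i)
        ∧ Fireable V V.init (iterWord u a 1)) := by
  constructor
  · intro hP
    refine ⟨?_, hP 1 le_rfl⟩
    intro j i
    rw [← SS_apply_fin]
    by_contra hc
    push_neg at hc
    set K : ℤ := (V.init i : ℤ) + CC V a (j.val+1) i with hK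
    have key : ∀ n : ℕ, 0 ≤ K + ((n+1 : ℕ) : ℤ) * SS V u (j.val+1) i := by
      intro n
      have h := hP (n+1) (Nat.le_add_left 1 n)
      rw [iterWord_eq] at h
      have hpre := h (((List.ofFn (blk u a (n+1))).take (j.val+1)).flatten)
          (flatten_take_prefix _ _) i
      rw [D_eq] at hpre
      simpa [hK, nsmul_eq_mul, add_assoc] using hpre
    have h1 := key K.toNat
    have h2 : K ≤ (K.toNat : ℤ) := Int.self_le_toNat K
    have h3 : ((K.toNat + 1 : ℕ) : ℤ) * SS V u (j.val+1) i
        ≤ ((K.toNat + 1 : ℕ) : ℤ) * (-1) := by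
      apply mul_le_mul_of_nonneg_left (by omega) (by positivity)
    push_cast at h1 h2 h3
    linarith
  · rintro ⟨h1, h2⟩ n hn
    obtain ⟨n', rfl⟩ : ∃ n', n = n' + 1 := ⟨n - 1, by omega⟩
    have hSS : ∀ m i, 0 ≤ SS V u m i := by
      intro m i
      cases m with
      | zero => simp [SS_zero]
      | succ m => rw [SS_apply_nat]; exact h1 _ i
    rw [iterWord_eq] at h2 ⊢
    have h2' : FireZ V (fun i => ((V.init i : ℤ))) ((List.ofFn (blk u a 1)).flatten) := h2
    have hx0 : ∀ i, 0 ≤ ((V.init i : ℤ)) := fun i => Int.natCast_nonneg _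
    -- per-block fireability at n = 1
    have hblk1 : ∀ l : Fin (k+1),
        FireZ V ((fun i => (V.init i : ℤ)) + (CC V a l.val + SS V u l.val)) (blk u a 1 l) := by
      intro l
      have h := FireZ_flatten_get V h2' l.val (by simpa using l.isLt)
      rw [D_eq, List.getElem_ofFn] at h
      simpa [one_smul, Fin.eta] using h
    show FireZ V (fun i => ((V.init i : ℤ))) ((List.ofFn (blk u a (n'+1))).flatten)
    apply FireZ_flatten_of V hx0
    intro j hj
    have hjk : j < k + 1 := by simpa using hj
    rw [D_eq, List.getElem_ofFn]
    cases j with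
    | zero =>
      simp only [CC_zero, SS_zero, smul_zero, add_zero, Fin.mk_zero, blk, Fin.cases_zero]
      have hz : FireZ V (fun i => (V.init i : ℤ)) (u 0) := by
        have h := hblk1 0
        simpa [CC_zero, SS_zero, blk, Fin.cases_zero] using h
      have h01 : SS V u 1 = wordδ V (u 0) := by
        simpa [SS_zero] using SS_succ V u 0
      apply FireZ_pow V hz hx0
      intro m hm i
      have : 0 ≤ wordδ V (u 0) i := (congrFun h01 i) ▸ hSS 1 i
      have := nsmul_nonneg this m
      linarith
    | succ jj =>
      have hjj : jj < k := by omega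
      rw [show (⟨jj+1, hjk⟩ : Fin (k+1)) = (⟨jj, hjj⟩ : Fin k).succ from rfl, blk_succ]
      set ii : Fin k := ⟨jj, hjj⟩ with hii
      set x0 : Fin d → ℤ := fun i => ((V.init i : ℤ)) with hx0def
      set z0 : Fin d → ℤ := x0 + (CC V a (jj+1) + SS V u (jj+1)) with hz0
      have hb1 : FireZ V z0 ([a ii] ++ (List.replicate 1 (u ii.succ)).flatten) := by
        have h := hblk1 ii.succ
        rw [blk_succ] at h
        simpa using h
      rw [FireZ_append] at hb1
      have hzA : FireZ V z0 [a ii] := hb1.1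
      have hzB : FireZ V (z0 + wordδ V [a ii]) (u ii.succ) := by
        have h := hb1.2
        rwa [show (List.replicate 1 (u ii.succ)).flatten = u ii.succ by simp] at h
      have hsucc : wordδ V (u ii.succ) = SS V u (jj+2) - SS V u (jj+1) := by
        have h := SS_succ V u ii.succ
        simp only [Fin.val_succ] at h
        rw [hii] at h ⊢
        simp only [Fin.succ_mk] at h ⊢
        rw [h]; ring
      have hzle : ∀ i, z0 i ≤ (x0 + (CC V a (jj+1) + (n'+1) • SS V u (jj+1))) i := by
        intro i
        have hs := hSS (jj+1) i
        have := nsmul_nonneg hs n'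
        simp only [hz0, Pi.add_apply, Pi.smul_apply, succ_nsmul]
        linarith [nsmul_nonneg hs n']
      rw [show (a ii :: (List.replicate (n'+1) (u ii.succ)).flatten)
            = [a ii] ++ (List.replicate (n'+1) (u ii.succ)).flatten from rfl,
        FireZ_append]
      refine ⟨FireZ_mono V hzle hzA, ?_⟩
      apply FireZ_pow V hzB
      · intro i
        have hn0 := FireZ_nonneg V hzB i
        have hs := nsmul_nonneg (hSS (jj+1) i) n'
        simp only [hz0, Pi.add_apply, Pi.smul_apply, succ_nsmul] at hn0 ⊢
        linarith
      · intro m hm i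
        have hs := hSS (jj+1) i
        have ht := hSS (jj+2) i
        have hmn : (m : ℤ) ≤ (n' : ℤ) := by exact_mod_cast Nat.lt_succ_iff.mp hm
        have hw : wordδ V (u ii.succ) i = SS V u (jj+2) i - SS V u (jj+1) i := by
          rw [hsucc]; simp
        simp only [hz0, Pi.add_apply, Pi.smul_apply, succ_nsmul, nsmul_eq_mul, hw,
          Pi.mul_apply, Pi.natCast_apply]
        have e1 : 0 ≤ ((n' : ℤ) - m) * SS V u (jj+1) i :=
          mul_nonneg (by linarith) hs
        have e2 : 0 ≤ (m : ℤ) * SS V u (jj+2) i :=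
          mul_nonneg (by positivity) ht
        nlinarith
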